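/- The complement of a cycle of even length is vertex decomposable. -/
import Mathlib

open SimpleGraph

variable {V : Type*}

/-- `S` is an independent set of `G`: no two (distinct) members are adjacent. -/
def IsIndepOn (G : SimpleGraph V) (S : Set V) : Prop :=
  S.Pairwise fun u w => ¬ G.Adj u w

/-- The closed neighborhood `N_G[v]` of `v` in `G`. -/
def closedNbhd (G : SimpleGraph V) (v : V) : Set V :=
  {u | G.Adj v u} ∪ {v}

/-- Vertex decomposability of the independence complex of the induced subgraph of `G`
on the vertex set `A`. -/
inductive VertexDecomp (G : SimpleGraph V) : Set V → Prop
  | discrete (A : Set V) (h : ∀ u ∈ A, ∀ w ∈ A, ¬ G.Adj u w) : VertexDecomp G A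
  | shed (A : Set V) (v : V) (hv : v ∈ A)
      (hshed : ∀ S : Set V, S ⊆ A \ closedNbhd G v → IsIndepOn G S →
        ∃ x ∈ A, G.Adj v x ∧ IsIndepOn G (insert x S))
      (hdel : VertexDecomp G (A \ {v}))
      (hlink : VertexDecomp G (A \ closedNbhd G v)) : VertexDecomp G A

/-- `v` is a shedding vertex of `H`: every independent set avoiding `N_H[v]` can be
extended by a neighbor of `v` to an independent set of `H \ {v}`. -/
def IsSheddingVertex (H : SimpleGraph V) (v : V) : Prop :=
  ∀ S : Set V, S ∩ closedNbhd H v = ∅ → IsIndepOn H S →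
    ∃ x, H.Adj v x ∧ IsIndepOn H (insert x S)

/-- value-level characterization of cycle adjacency -/
lemma cadj {N : ℕ} (hN : 4 ≤ N) (u v : Fin N) :
    (cycleGraph N).Adj u v ↔
      (u.val + 1 = v.val ∨ v.val + 1 = u.val ∨
        (u.val = 0 ∧ v.val + 1 = N) ∨ (v.val = 0 ∧ u.val + 1 = N)) := by
  have hu := u.isLt
  have hv := v.isLt
  rw [cycleGraph_adj']
  have h1 : (u - v).val = (N - v.val + u.val) % N := by rw [Fin.sub_def]
  have h2 : (v - u).val = (N - u.val + v.val) % N := by rw [Fin.sub_def]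
  rw [h1, h2]
  have e1 : (N - v.val + u.val) % N = if N - v.val + u.val < N then N - v.val + u.val
      else N - v.val + u.val - N := by
    split
    · exact Nat.mod_eq_of_lt ‹_›
    · rw [Nat.mod_eq_sub_mod (by omega), Nat.mod_eq_of_lt (by omega)]
  have e2 : (N - u.val + v.val) % N = if N - u.val + v.val < N then N - u.val + v.val
      else N - u.val + v.val - N := by
    split
    · exact Nat.mod_eq_of_lt ‹_›
    · rw [Nat.mod_eq_sub_mod (by omega), Nat.mod_eq_of_lt (by omega)]
  rw [e1, e2]
  split <;> split <;> omega

/-- complement-of-cycle adjacency -/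
lemma gcadj {N : ℕ} (hN : 4 ≤ N) (u v : Fin N) :
    ((cycleGraph N)ᶜ).Adj u v ↔ u.val ≠ v.val ∧
      ¬(u.val + 1 = v.val ∨ v.val + 1 = u.val ∨
        (u.val = 0 ∧ v.val + 1 = N) ∨ (v.val = 0 ∧ u.val + 1 = N)) := by
  rw [SimpleGraph.compl_adj, cadj hN, Ne, Fin.ext_iff]

/-- left-mk specialization of `cadj` -/
lemma cadjL {N : ℕ} (hN : 4 ≤ N) (a : ℕ) (ha : a < N) (v : Fin N) :
    (cycleGraph N).Adj ⟨a, ha⟩ v ↔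
      (a + 1 = v.val ∨ v.val + 1 = a ∨
        (a = 0 ∧ v.val + 1 = N) ∨ (v.val = 0 ∧ a + 1 = N)) :=
  cadj hN _ _

/-- two-mk specialization of `gcadj` -/
lemma gcadj2 {N : ℕ} (hN : 4 ≤ N) (a b : ℕ) (ha : a < N) (hb : b < N) :
    ((cycleGraph N)ᶜ).Adj ⟨a, ha⟩ ⟨b, hb⟩ ↔ a ≠ b ∧
      ¬(a + 1 = b ∨ b + 1 = a ∨ (a = 0 ∧ b + 1 = N) ∨ (b = 0 ∧ a + 1 = N)) :=
  gcadj hN _ _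

/-- two-mk specialization of `cadj` -/
lemma cadj2 {N : ℕ} (hN : 4 ≤ N) (a b : ℕ) (ha : a < N) (hb : b < N) :
    (cycleGraph N).Adj ⟨a, ha⟩ ⟨b, hb⟩ ↔
      (a + 1 = b ∨ b + 1 = a ∨ (a = 0 ∧ b + 1 = N) ∨ (b = 0 ∧ a + 1 = N)) :=
  cadj hN _ _

lemma mem_closedNbhd (G : SimpleGraph V) (v x : V) :
    x ∈ closedNbhd G v ↔ G.Adj v x ∨ x = v := by
  simp only [closedNbhd, Set.mem_union, Set.mem_setOf_eq, Set.mem_singleton_iff]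

lemma adj_of_not_mem_closedNbhd {G : SimpleGraph V} {v x : V}
    (hx : x ∉ closedNbhd Gᶜ v) : G.Adj v x := by
  rw [mem_closedNbhd] at hx
  push_neg at hx
  obtain ⟨h1, h2⟩ := hx
  rw [SimpleGraph.compl_adj] at h1
  push_neg at h1
  exact h1 fun he => h2 he.symm

lemma indep_pair {G : SimpleGraph V} {T : Set V} {a b : V}
    (hT : ∀ x ∈ T, x = a ∨ x = b) (hab : ¬ G.Adj a b) : IsIndepOn G T := by
  intro u hu w hw hne h
  rcases hT u hu with rfl | rfl <;> rcases hT w hw with rfl | rfl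
  · exact hne rfl
  · exact hab h
  · exact hab h.symm
  · exact hne rfl

lemma arc_decomp {N : ℕ} (hN : 4 ≤ N) :
    ∀ m k : ℕ, 1 ≤ k → N ≤ k + m →
      VertexDecomp (cycleGraph N)ᶜ {x : Fin N | k ≤ x.val} := by
  intro m
  induction m with
  | zero =>
    intro k hk hkm
    exact VertexDecomp.discrete _ (fun u hu w hw h => by
      have := u.isLt; simp only [Set.mem_setOf_eq] at hu; omega)
  | succ m ih =>
    intro k hk hkm
    by_cases hbig : N ≤ k + 2
    · refine VertexDecomp.discrete _ (fun u hu w hw h => ?_)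
      have hu' := u.isLt; have hw' := w.isLt
      simp only [Set.mem_setOf_eq] at hu hw
      rw [gcadj hN] at h
      omega
    · have hk3 : k + 3 ≤ N := by omega
      refine VertexDecomp.shed _ (⟨k, by omega⟩ : Fin N) (by simp) ?_ ?_ ?_
      · -- shedding condition
        intro S hS hSind
        refine ⟨⟨k + 2, by omega⟩, by simp, ?_, ?_⟩
        · rw [gcadj2 hN]; omega
        · refine indep_pair (a := (⟨k + 2, by omega⟩ : Fin N))
            (b := (⟨k + 1, by omega⟩ : Fin N)) (fun x hx => ?_) ?_
          · rcases Set.mem_insert_iff.mp hx with rfl | hxS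
            · exact Or.inl rfl
            · right
              obtain ⟨hxA, hxN⟩ := hS hxS
              have hadj := adj_of_not_mem_closedNbhd hxN
              rw [cadjL hN] at hadj
              simp only [Set.mem_setOf_eq] at hxA
              have := x.isLt
              exact Fin.ext (show x.val = k + 1 by omega)
          · rw [gcadj2 hN]; omega
      · -- deletion
        have heq : {x : Fin N | k ≤ x.val} \ {(⟨k, by omega⟩ : Fin N)}
            = {x : Fin N | k + 1 ≤ x.val} := by
          ext x
          simp only [Set.mem_diff, Set.mem_setOf_eq, Set.mem_singleton_iff, Fin.ext_iff]
          omega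
        rw [heq]
        exact ih (k + 1) (by omega) (by omega)
      · -- link
        have heq : {x : Fin N | k ≤ x.val} \ closedNbhd (cycleGraph N)ᶜ (⟨k, by omega⟩ : Fin N)
            = {(⟨k + 1, by omega⟩ : Fin N)} := by
          ext x
          constructor
          · rintro ⟨hxA, hxN⟩
            have hadj := adj_of_not_mem_closedNbhd hxN
            rw [cadjL hN] at hadj
            simp only [Set.mem_setOf_eq] at hxA
            have := x.isLt
            exact Fin.ext (show x.val = k + 1 by omega)
          · rintro rfl
            refine ⟨by simp, ?_⟩
            rw [mem_closedNbhd]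
            rintro (h | h)
            · rw [gcadj2 hN] at h; omega
            · simp only [Fin.mk.injEq] at h; omega
        rw [heq]
        exact VertexDecomp.discrete _ (fun u hu w hw h => by
          simp only [Set.mem_singleton_iff] at hu hw
          subst hu; subst hw; exact (SimpleGraph.irrefl _) h)

lemma univ_decomp {N : ℕ} (hN : 4 ≤ N) :
    VertexDecomp (cycleGraph N)ᶜ Set.univ := by
  have hNpos : 0 < N := by omega
  -- key: elements outside the closed neighborhood of 0 have value 1 or N-1
  have hlink0 : ∀ x : Fin N, x ∉ closedNbhd (cycleGraph N)ᶜ (⟨0, hNpos⟩ : Fin N) →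
      x = (⟨1, by omega⟩ : Fin N) ∨ x = (⟨N - 1, by omega⟩ : Fin N) := by
    intro x hx
    have hadj := adj_of_not_mem_closedNbhd hx
    rw [cadjL hN] at hadj
    have := x.isLt
    rcases Nat.lt_or_ge x.val 2 with h2 | h2
    · exact Or.inl (Fin.ext (show x.val = 1 by omega))
    · exact Or.inr (Fin.ext (show x.val = N - 1 by omega))
  refine VertexDecomp.shed _ (⟨0, hNpos⟩ : Fin N) (Set.mem_univ _) ?_ ?_ ?_
  · -- shedding condition at 0
    intro S hS hSind
    have hSmem : ∀ x ∈ S, x = (⟨1, by omega⟩ : Fin N) ∨ x = (⟨N - 1, by omega⟩ : Fin N) :=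
      fun x hx => hlink0 x (hS hx).2
    by_cases hmem : (⟨N - 1, by omega⟩ : Fin N) ∈ S
    · -- N-1 ∈ S, so 1 ∉ S; use N-2
      have h1 : (⟨1, by omega⟩ : Fin N) ∉ S := by
        intro h1
        have hne : (⟨1, by omega⟩ : Fin N) ≠ (⟨N - 1, by omega⟩ : Fin N) := by
          intro h; simp only [Fin.mk.injEq] at h; omega
        exact hSind h1 hmem hne (by rw [gcadj2 hN]; omega)
      refine ⟨⟨N - 2, by omega⟩, Set.mem_univ _, ?_, ?_⟩
      · rw [gcadj2 hN]; omega
      · refine indep_pair (a := (⟨N - 2, by omega⟩ : Fin N))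
            (b := (⟨N - 1, by omega⟩ : Fin N)) (fun x hx => ?_) ?_
        · rcases Set.mem_insert_iff.mp hx with rfl | hxS
          · exact Or.inl rfl
          · rcases hSmem x hxS with rfl | rfl
            · exact absurd hxS h1
            · exact Or.inr rfl
        · rw [gcadj2 hN]; omega
    · -- N-1 ∉ S, so S ⊆ {1}; use 2
      refine ⟨⟨2, by omega⟩, Set.mem_univ _, ?_, ?_⟩
      · rw [gcadj2 hN]; omega
      · refine indep_pair (a := (⟨2, by omega⟩ : Fin N))
            (b := (⟨1, by omega⟩ : Fin N)) (fun x hx => ?_) ?_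
        · rcases Set.mem_insert_iff.mp hx with rfl | hxS
          · exact Or.inl rfl
          · rcases hSmem x hxS with rfl | rfl
            · exact Or.inr rfl
            · exact absurd hxS hmem
        · rw [gcadj2 hN]; omega
  · -- deletion: univ minus 0
    have heq : (Set.univ : Set (Fin N)) \ {(⟨0, hNpos⟩ : Fin N)} = {x : Fin N | 1 ≤ x.val} := by
      ext x
      simp only [Set.mem_diff, Set.mem_univ, true_and, Set.mem_singleton_iff,
        Set.mem_setOf_eq, Fin.ext_iff]
      omega
    rw [heq]
    exact arc_decomp hN N 1 le_rfl (by omega)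
  · -- link of 0: the pair {1, N-1}
    have heq : (Set.univ : Set (Fin N)) \ closedNbhd (cycleGraph N)ᶜ (⟨0, hNpos⟩ : Fin N)
        = {(⟨1, by omega⟩ : Fin N), (⟨N - 1, by omega⟩ : Fin N)} := by
      ext x
      constructor
      · rintro ⟨-, hx⟩
        exact hlink0 x hx
      · rintro (rfl | rfl) <;>
        · refine ⟨Set.mem_univ _, ?_⟩
          rw [mem_closedNbhd]
          rintro (h | h)
          · rw [gcadj2 hN] at h; omega
          · simp only [Fin.mk.injEq] at h; omega
    rw [heq]
    -- K2 in the complement graph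
    have hlinkab : ∀ x : Fin N,
        x ∈ ({(⟨1, by omega⟩ : Fin N), (⟨N - 1, by omega⟩ : Fin N)} : Set (Fin N)) →
        x ∉ closedNbhd (cycleGraph N)ᶜ (⟨1, by omega⟩ : Fin N) → False := by
      intro x hx hxN
      have hadj := adj_of_not_mem_closedNbhd hxN
      rcases hx with rfl | rfl <;> rw [cadj2 hN] at hadj <;> omega
    refine VertexDecomp.shed _ (⟨1, by omega⟩ : Fin N) (Set.mem_insert _ _) ?_ ?_ ?_
    · intro S hS hSind
      have hSempty : ∀ x, x ∉ S := fun x hx => hlinkab x (hS hx).1 (hS hx).2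
      refine ⟨⟨N - 1, by omega⟩, Set.mem_insert_of_mem _ rfl, ?_, ?_⟩
      · rw [gcadj2 hN]; omega
      · refine indep_pair (a := (⟨N - 1, by omega⟩ : Fin N))
          (b := (⟨N - 1, by omega⟩ : Fin N)) (fun x hx => ?_) (SimpleGraph.irrefl _)
        rcases Set.mem_insert_iff.mp hx with rfl | hxS
        · exact Or.inl rfl
        · exact absurd hxS (hSempty x)
    · have heq2 : ({(⟨1, by omega⟩ : Fin N), (⟨N - 1, by omega⟩ : Fin N)} : Set (Fin N))
          \ {(⟨1, by omega⟩ : Fin N)} = {(⟨N - 1, by omega⟩ : Fin N)} := by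
        ext x
        simp only [Set.mem_diff, Set.mem_insert_iff, Set.mem_singleton_iff]
        constructor
        · rintro ⟨rfl | rfl, h⟩
          · exact absurd rfl h
          · rfl
        · rintro rfl
          refine ⟨Or.inr rfl, fun h => ?_⟩
          simp only [Fin.mk.injEq] at h; omega
      rw [heq2]
      exact VertexDecomp.discrete _ (fun u hu w hw h => by
        simp only [Set.mem_singleton_iff] at hu hw
        subst hu; subst hw; exact (SimpleGraph.irrefl _) h)
    · refine VertexDecomp.discrete _ (fun u hu w hw h => ?_)
      exact absurd hu.2 (fun h' => hlinkab u hu.1 h')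

theorem complement_even_cycle_vertexDecomposable (n : ℕ) (hn : 2 ≤ n) :
    VertexDecomp (SimpleGraph.cycleGraph (2 * n))ᶜ Set.univ := by
  exact univ_decomp (by omega)
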